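/- The function x(τ) = (−c₂−(c₁+c₃)sin τ)/((c₁+c₃+c₂ sin τ)cos τ), ((−c₂−(c₁−c₃)sin τ)/((c₁−c₃+c₂ sin τ)cos τ), −tan τ) is a solution of the system ẋ₁ = x₁(x₁−x₂−x₃), ẋ₂ = x₂(x₂−x₁−x₃), ẋ₃ = −x₁x₂ for any (c₁,c₂,c₃) ∈ ℂ³ satisfying c₁² − c₂² − c₃² = 0, on any domain where all denominators are nonzero. -/

import Mathlib

theorem myaux (a a' b S C : ℂ) (hb : b ^ 2 = a * a') (hp : S ^ 2 = 1 - C ^ 2)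
    (h1 : a + b * S ≠ 0) (h2 : a' + b * S ≠ 0) (hc : C ≠ 0) :
    (-(a * C) * ((a + b * S) * C) - (-b - a * S) * (b * C * C + (a + b * S) * (-S)))
        / ((a + b * S) * C) ^ 2
     = (-b - a * S) / ((a + b * S) * C) *
        ((-b - a * S) / ((a + b * S) * C) - (-b - a' * S) / ((a' + b * S) * C) - -(S / C)) := by
  field_simp
  linear_combination (-a * S ^ 2 + b * S - b * S ^ 3 + a) * hb - ((a * (a + b * S) + (-b - a * S) * b) * (a' + b * S)) * hp

/-- the general solution of `gDH(1,1,0;0,0,0;1)` parametrized by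
the curve `c₁² − c₂² − c₃² = 0`. -/
theorem stmt_15 (c₁ c₂ c₃ : ℂ) (hC : c₁ ^ 2 - c₂ ^ 2 - c₃ ^ 2 = 0)
    (x₁ x₂ x₃ : ℂ → ℂ)
    (hx₁ : ∀ s, x₁ s = (-c₂ - (c₁ + c₃) * Complex.sin s)
        / ((c₁ + c₃ + c₂ * Complex.sin s) * Complex.cos s))
    (hx₂ : ∀ s, x₂ s = (-c₂ - (c₁ - c₃) * Complex.sin s)
        / ((c₁ - c₃ + c₂ * Complex.sin s) * Complex.cos s))
    (hx₃ : ∀ s, x₃ s = -Complex.tan s)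
    (τ : ℂ)
    (hd₁ : c₁ + c₃ + c₂ * Complex.sin τ ≠ 0)
    (hd₂ : c₁ - c₃ + c₂ * Complex.sin τ ≠ 0)
    (hcos : Complex.cos τ ≠ 0) :
    HasDerivAt x₁ (x₁ τ * (x₁ τ - x₂ τ - x₃ τ)) τ ∧
    HasDerivAt x₂ (x₂ τ * (x₂ τ - x₁ τ - x₃ τ)) τ ∧
    HasDerivAt x₃ (-(x₁ τ * x₂ τ)) τ := by
  have hX₁ : x₁ = fun s => (-c₂ - (c₁ + c₃) * Complex.sin s)
      / ((c₁ + c₃ + c₂ * Complex.sin s) * Complex.cos s) := funext hx₁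
  have hX₂ : x₂ = fun s => (-c₂ - (c₁ - c₃) * Complex.sin s)
      / ((c₁ - c₃ + c₂ * Complex.sin s) * Complex.cos s) := funext hx₂
  have hX₃ : x₃ = fun s => -Complex.tan s := funext hx₃
  subst hX₁ hX₂ hX₃
  have key : c₂ ^ 2 = (c₁ + c₃) * (c₁ - c₃) := by linear_combination -hC
  have key' : c₂ ^ 2 = (c₁ - c₃) * (c₁ + c₃) := by linear_combination -hC
  have pyth : Complex.sin τ ^ 2 = 1 - Complex.cos τ ^ 2 := by
    linear_combination Complex.sin_sq_add_cos_sq τ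
  have hD1 : (c₁ + c₃ + c₂ * Complex.sin τ) * Complex.cos τ ≠ 0 := mul_ne_zero hd₁ hcos
  have hD2 : (c₁ - c₃ + c₂ * Complex.sin τ) * Complex.cos τ ≠ 0 := mul_ne_zero hd₂ hcos
  have hN1 : HasDerivAt (fun s => -c₂ - (c₁ + c₃) * Complex.sin s)
      (-((c₁ + c₃) * Complex.cos τ)) τ := by
    simpa using ((Complex.hasDerivAt_sin τ).const_mul (c₁ + c₃)).const_sub (-c₂)
  have hN2 : HasDerivAt (fun s => -c₂ - (c₁ - c₃) * Complex.sin s)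
      (-((c₁ - c₃) * Complex.cos τ)) τ := by
    simpa using ((Complex.hasDerivAt_sin τ).const_mul (c₁ - c₃)).const_sub (-c₂)
  have hDen1 : HasDerivAt (fun s => (c₁ + c₃ + c₂ * Complex.sin s) * Complex.cos s)
      ((c₂ * Complex.cos τ) * Complex.cos τ
        + (c₁ + c₃ + c₂ * Complex.sin τ) * (-Complex.sin τ)) τ :=
    (((Complex.hasDerivAt_sin τ).const_mul c₂).const_add (c₁ + c₃)).mul
      (Complex.hasDerivAt_cos τ)
  have hDen2 : HasDerivAt (fun s => (c₁ - c₃ + c₂ * Complex.sin s) * Complex.cos s)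
      ((c₂ * Complex.cos τ) * Complex.cos τ
        + (c₁ - c₃ + c₂ * Complex.sin τ) * (-Complex.sin τ)) τ :=
    (((Complex.hasDerivAt_sin τ).const_mul c₂).const_add (c₁ - c₃)).mul
      (Complex.hasDerivAt_cos τ)
  refine ⟨?_, ?_, ?_⟩
  · have h := hN1.div hDen1 hD1
    rw [Pi.div_def] at h
    convert h using 1
    · rfl
    · rfl
    simp only [Complex.tan_eq_sin_div_cos]
    exact (myaux (c₁ + c₃) (c₁ - c₃) c₂ (Complex.sin τ) (Complex.cos τ)
      key pyth hd₁ hd₂ hcos).symm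
  · have h := hN2.div hDen2 hD2
    rw [Pi.div_def] at h
    convert h using 1
    · rfl
    · rfl
    simp only [Complex.tan_eq_sin_div_cos]
    exact (myaux (c₁ - c₃) (c₁ + c₃) c₂ (Complex.sin τ) (Complex.cos τ)
      key' pyth hd₂ hd₁ hcos).symm
  · have h := (Complex.hasDerivAt_tan hcos).neg
    convert h using 1
    · rfl
    · rfl
    · rfl
    beta_reduce
    field_simp
    linear_combination (1 - Complex.sin τ ^ 2) * hC
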